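/- Let I ⊆ S = k[x_1,...,x_n] be a homogeneous ideal containing a regular sequence of degrees d = (d_1,...,d_h), and suppose there exists a d-LPP ideal 𝕃_j for each j ≥ 0 such that HF(I; j) = HF(𝕃_j; j) and HF(I; j+1) ≥ HF(𝕃_j; j+1) (i.e., I satisfies EGH_{d,n}(j) for all j). Then there exists a single d-LPP ideal 𝕃 with HF(𝕃; j) = HF(I; j) for all j. -/

import Mathlib

open MvPolynomial

noncomputable section EGHDefs

/-- Total degree of an exponent vector. -/
def mdeg {n : ℕ} (a : Fin n →₀ ℕ) : ℕ := a.sum fun _ e => e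

/-- `monLT a b` : the monomial `x^a` is strictly smaller than `x^b` in the
lexicographic order with `x_1 > x_2 > ... > x_n`. -/
def monLT {n : ℕ} (a b : Fin n →₀ ℕ) : Prop :=
  ∃ i : Fin n, (∀ j : Fin n, j < i → a j = b j) ∧ a i < b i

/-- A lex-segment of exponent vectors in degree `j`. -/
def LexSeg {n : ℕ} (j : ℕ) (V : Set (Fin n →₀ ℕ)) : Prop :=
  (∀ a ∈ V, mdeg a = j) ∧ ∀ a ∈ V, ∀ b : Fin n →₀ ℕ, mdeg b = j → monLT a b → b ∈ V

variable (k : Type) [Field k] {n : ℕ}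

/-- Hilbert function of a (homogeneous) ideal `I`: the `k`-dimension of its degree `j` part. -/
def HF (I : Ideal (MvPolynomial (Fin n) k)) (j : ℕ) : ℕ :=
  Module.finrank k
    ↥(Submodule.restrictScalars k (I : Submodule (MvPolynomial (Fin n) k) (MvPolynomial (Fin n) k))
      ⊓ homogeneousSubmodule (Fin n) k j)

/-- Hilbert function of the quotient `S/I` in degree `j`. -/
def HFq (I : Ideal (MvPolynomial (Fin n) k)) (j : ℕ) : ℕ :=
  Module.finrank k
    ↥((homogeneousSubmodule (Fin n) k j).map (Ideal.Quotient.mkₐ k I).toLinearMap)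

/-- `I` is a homogeneous ideal. -/
def IsHomog (I : Ideal (MvPolynomial (Fin n) k)) : Prop :=
  ∀ f ∈ I, ∀ j : ℕ, homogeneousComponent j f ∈ I

/-- `f 0, f 1, ..., f (h-1)` is a regular sequence. -/
def IsRegSeq {h : ℕ} (f : Fin h → MvPolynomial (Fin n) k) : Prop :=
  Ideal.span (Set.range f) ≠ ⊤ ∧
  ∀ i : Fin h, ∀ g : MvPolynomial (Fin n) k,
    g * f i ∈ Ideal.span (f '' {j | j < i}) → g ∈ Ideal.span (f '' {j | j < i})

/-- The monomial complete intersection `(x_1^{d_1}, ..., x_h^{d_h})`. -/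
def powIdeal {h : ℕ} (hh : h ≤ n) (d : Fin h → ℕ) : Ideal (MvPolynomial (Fin n) k) :=
  Ideal.span (Set.range fun i : Fin h => (X (Fin.castLE hh i) : MvPolynomial (Fin n) k) ^ d i)

/-- `L` is a lexicographic (monomial) ideal. -/
def IsLexIdeal (L : Ideal (MvPolynomial (Fin n) k)) : Prop :=
  (∀ f ∈ L, ∀ a ∈ f.support, (monomial a (1 : k)) ∈ L) ∧
  ∀ a b : Fin n →₀ ℕ, mdeg a = mdeg b → monLT a b →
    (monomial a (1 : k)) ∈ L → monomial b (1 : k) ∈ L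

/-- `𝕃` is a `d`-LPP (lex-plus-power) ideal. -/
def IsLPP {h : ℕ} (hh : h ≤ n) (d : Fin h → ℕ) (𝕃 : Ideal (MvPolynomial (Fin n) k)) : Prop :=
  ∃ L : Ideal (MvPolynomial (Fin n) k), IsLexIdeal k L ∧ 𝕃 = powIdeal k hh d ⊔ L

/-- `I` contains a regular sequence of degrees `d`. -/
def ContainsRS {h : ℕ} (d : Fin h → ℕ) (I : Ideal (MvPolynomial (Fin n) k)) : Prop :=
  ∃ f : Fin h → MvPolynomial (Fin n) k,
    IsRegSeq k f ∧ (∀ i, (f i).IsHomogeneous (d i)) ∧ ∀ i, f i ∈ I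

/-- `I` satisfies the Eisenbud-Green-Harris conjecture for the degree sequence `d`:
there is a `d`-LPP ideal with the same Hilbert function as `I`. -/
def EGH {h : ℕ} (hh : h ≤ n) (d : Fin h → ℕ) (I : Ideal (MvPolynomial (Fin n) k)) : Prop :=
  ∃ 𝕃 : Ideal (MvPolynomial (Fin n) k), IsLPP k hh d 𝕃 ∧ ∀ j : ℕ, HF k 𝕃 j = HF k I j

end EGHDefs

noncomputable section EGHAux
open MvPolynomial

namespace EGHAux

variable (k : Type) [Field k] {n : ℕ}

def MonSpan (A : Set (Fin n →₀ ℕ)) : Ideal (MvPolynomial (Fin n) k) :=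
  Ideal.span ((fun a => monomial a (1 : k)) '' A)

def DegSet {n : ℕ} (A : Set (Fin n →₀ ℕ)) (j : ℕ) : Set (Fin n →₀ ℕ) :=
  {b | mdeg b = j ∧ ∃ a ∈ A, a ≤ b}

variable {k}

lemma mdeg_eq_sum (a : Fin n →₀ ℕ) : mdeg a = ∑ i, a i :=
  Finsupp.sum_fintype _ _ (fun _ => rfl)

lemma mdeg_eq_degree (a : Fin n →₀ ℕ) : mdeg a = a.degree := by
  rw [Finsupp.degree]; rfl

lemma coord_le_mdeg (a : Fin n →₀ ℕ) (i : Fin n) : a i ≤ mdeg a := by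
  rw [mdeg_eq_sum]
  exact Finset.single_le_sum (fun _ _ => Nat.zero_le _) (Finset.mem_univ i)

lemma mdeg_add (a b : Fin n →₀ ℕ) : mdeg (a + b) = mdeg a + mdeg b := by
  simp [mdeg_eq_sum, Finset.sum_add_distrib]

lemma mdeg_single (i : Fin n) (e : ℕ) : mdeg (Finsupp.single i e) = e := by
  simp [mdeg, Finsupp.sum_single_index]


lemma mdeg_le_of_le {a b : Fin n →₀ ℕ} (h : a ≤ b) : mdeg a ≤ mdeg b := by
  rw [mdeg_eq_sum, mdeg_eq_sum]
  exact Finset.sum_le_sum fun i _ => (Finsupp.le_def.mp h) i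

lemma eq_of_le_of_mdeg_le {a b : Fin n →₀ ℕ} (h : a ≤ b) (hd : mdeg b ≤ mdeg a) : a = b := by
  by_contra hne
  obtain ⟨i, hi⟩ : ∃ i, a i ≠ b i := by
    by_contra hc; push_neg at hc; exact hne (Finsupp.ext hc)
  have hlt : a i < b i := lt_of_le_of_ne (Finsupp.le_def.mp h i) hi
  have : mdeg a < mdeg b := by
    rw [mdeg_eq_sum, mdeg_eq_sum]
    exact Finset.sum_lt_sum (fun j _ => Finsupp.le_def.mp h j) ⟨i, Finset.mem_univ i, hlt⟩
  omega

lemma monLT_trans {a b c : Fin n →₀ ℕ} (h1 : monLT a b) (h2 : monLT b c) : monLT a c := by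
  obtain ⟨i, hpre, hlt⟩ := h1
  obtain ⟨i', hpre', hlt'⟩ := h2
  rcases lt_trichotomy i i' with h | h | h
  · exact ⟨i, fun j hj => (hpre j hj).trans (hpre' j (hj.trans h)), hlt.trans_le (hpre' i h).le⟩
  · subst h; exact ⟨i, fun j hj => (hpre j hj).trans (hpre' j hj), hlt.trans hlt'⟩
  · exact ⟨i', fun j hj => (hpre j (hj.trans h)).trans (hpre' j hj), ((hpre i' h) ▸ hlt')⟩

lemma monLT_trichotomy {a b : Fin n →₀ ℕ} (h : a ≠ b) : monLT a b ∨ monLT b a := by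
  classical
  have hne : (Finset.univ.filter (fun i : Fin n => a i ≠ b i)).Nonempty := by
    by_contra hc
    rw [Finset.not_nonempty_iff_eq_empty, Finset.filter_eq_empty_iff] at hc
    push_neg at hc
    exact h (Finsupp.ext fun i => hc (Finset.mem_univ i))
  set i := (Finset.univ.filter (fun i : Fin n => a i ≠ b i)).min' hne with hi
  have hmem := (Finset.univ.filter (fun i : Fin n => a i ≠ b i)).min'_mem hne
  rw [Finset.mem_filter] at hmem
  have hpre : ∀ j : Fin n, j < i → a j = b j := by
    intro j hj
    by_contra hc
    exact absurd (Finset.min'_le _ j (Finset.mem_filter.mpr ⟨Finset.mem_univ j, hc⟩)) (not_le.mpr hj)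
  rcases lt_or_gt_of_ne hmem.2 with h' | h'
  · exact Or.inl ⟨i, hpre, h'⟩
  · exact Or.inr ⟨i, fun j hj => (hpre j hj).symm, h'⟩


lemma mem_MonSpan {A : Set (Fin n →₀ ℕ)} {f : MvPolynomial (Fin n) k} :
    f ∈ MonSpan k A ↔ ∀ b ∈ f.support, ∃ a ∈ A, a ≤ b :=
  mem_ideal_span_monomial_image

lemma monomial_mem_MonSpan {A : Set (Fin n →₀ ℕ)} {b : Fin n →₀ ℕ} :
    monomial b (1 : k) ∈ MonSpan k A ↔ ∃ a ∈ A, a ≤ b := by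
  classical
  rw [mem_MonSpan]
  constructor
  · intro H
    exact H b (by rw [support_monomial]; simp)
  · intro H b' hb'
    rw [support_monomial] at hb'
    simp only [if_neg (one_ne_zero (α := k))] at hb'
    rw [Finset.mem_singleton] at hb'
    subst hb'
    exact H

lemma finite_mdeg_set (j : ℕ) : {a : Fin n →₀ ℕ | mdeg a = j}.Finite := by
  apply Set.Finite.of_finite_image (f := fun (a : Fin n →₀ ℕ) (i : Fin n) => (⟨min (a i) j, by omega⟩ : Fin (j+1)))
  · exact Set.toFinite _
  · intro a ha b hb hab
    have ha' : ∀ i, a i ≤ j := fun i => ha ▸ coord_le_mdeg a i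
    have hb' : ∀ i, b i ≤ j := fun i => hb ▸ coord_le_mdeg b i
    apply Finsupp.ext
    intro i
    have := congrFun hab i
    have := Fin.mk.injEq _ _ _ _ ▸ this
    rwa [min_eq_left (ha' i), min_eq_left (hb' i)] at this
lemma finite_DegSet (A : Set (Fin n →₀ ℕ)) (j : ℕ) : (DegSet A j).Finite :=
  (finite_mdeg_set j).subset fun _ hb => hb.1

lemma DegSet_union (A B : Set (Fin n →₀ ℕ)) (j : ℕ) :
    DegSet (A ∪ B) j = DegSet A j ∪ DegSet B j := by
  ext b
  simp only [DegSet, Set.mem_setOf_eq, Set.mem_union]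
  constructor
  · rintro ⟨hd, a, (ha | ha), hle⟩
    · exact Or.inl ⟨hd, a, ha, hle⟩
    · exact Or.inr ⟨hd, a, ha, hle⟩
  · rintro (⟨hd, a, ha, hle⟩ | ⟨hd, a, ha, hle⟩)
    · exact ⟨hd, a, Or.inl ha, hle⟩
    · exact ⟨hd, a, Or.inr ha, hle⟩

lemma MonSpan_sup (A B : Set (Fin n →₀ ℕ)) :
    MonSpan k A ⊔ MonSpan k B = MonSpan k (A ∪ B) := by
  unfold MonSpan
  rw [Set.image_union, Ideal.span_union]

lemma MonSpan_eq_of_degSet {A B : Set (Fin n →₀ ℕ)}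
    (h : ∀ j, DegSet A j = DegSet B j) : MonSpan k A = MonSpan k B := by
  have key : ∀ (X Y : Set (Fin n →₀ ℕ)), (∀ j, DegSet X j = DegSet Y j) →
      (MonSpan k X : Ideal (MvPolynomial (Fin n) k)) ≤ MonSpan k Y := by
    intro X Y hXY
    intro f hf
    rw [mem_MonSpan] at hf ⊢
    intro b hb
    have : b ∈ DegSet X (mdeg b) := ⟨rfl, hf b hb⟩
    rw [hXY] at this
    exact this.2
  exact le_antisymm (key A B h) (key B A fun j => (h j).symm)

/-- the degree-`j` graded piece of a monomial ideal. -/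
lemma piece_MonSpan (A : Set (Fin n →₀ ℕ)) (j : ℕ) :
    Submodule.restrictScalars k
        ((MonSpan k A : Ideal (MvPolynomial (Fin n) k)) :
          Submodule (MvPolynomial (Fin n) k) (MvPolynomial (Fin n) k))
      ⊓ homogeneousSubmodule (Fin n) k j
    = Submodule.span k ((fun a => monomial a (1 : k)) '' DegSet A j) := by
  apply le_antisymm
  · intro f hf
    rw [Submodule.mem_inf] at hf
    obtain ⟨hfI, hfh⟩ := hf
    rw [Submodule.restrictScalars_mem] at hfI
    rw [mem_homogeneousSubmodule] at hfh
    rw [← support_sum_monomial_coeff f]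
    apply Submodule.sum_mem
    intro a ha
    have hcoeff : coeff a f ≠ 0 := (mem_support_iff).mp ha
    have h1 : mdeg a = j := by
      rw [mdeg_eq_degree]
      by_contra hc
      exact hcoeff (hfh.coeff_eq_zero hc)
    have h2 := (mem_MonSpan.mp hfI) a ha
    have : (monomial a) (coeff a f) = (coeff a f) • monomial a (1 : k) := by
      rw [smul_monomial, smul_eq_mul, mul_one]
    rw [this]
    exact Submodule.smul_mem _ _ (Submodule.subset_span ⟨a, ⟨h1, h2⟩, rfl⟩)
  · rw [Submodule.span_le]
    rintro _ ⟨a, ⟨ha1, ha2⟩, rfl⟩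
    rw [SetLike.mem_coe, Submodule.mem_inf, Submodule.restrictScalars_mem]
    constructor
    · exact monomial_mem_MonSpan.mpr ha2
    · rw [mem_homogeneousSubmodule]
      exact isHomogeneous_monomial _ (by rw [← mdeg_eq_degree]; exact ha1)

lemma HF_MonSpan (A : Set (Fin n →₀ ℕ)) (j : ℕ) :
    HF k (MonSpan k A) j = (DegSet A j).ncard := by
  unfold HF
  rw [piece_MonSpan]
  haveI : Fintype (DegSet A j) := (finite_DegSet A j).fintype
  rw [Set.image_eq_range]
  have li : LinearIndependent k (fun (x : DegSet A j) => monomial (x : Fin n →₀ ℕ) (1 : k)) := by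
    have h2 := (basisMonomials (Fin n) k).linearIndependent.comp
      (fun (x : DegSet A j) => (x : Fin n →₀ ℕ)) Subtype.val_injective
    simp only [coe_basisMonomials] at h2
    exact h2
  rw [finrank_span_eq_card li, Set.ncard_eq_toFinset_card', Set.toFinset_card]

def Pgen {h : ℕ} (hh : h ≤ n) (d : Fin h → ℕ) : Set (Fin n →₀ ℕ) :=
  Set.range fun i : Fin h => Finsupp.single (Fin.castLE hh i) (d i)

lemma powIdeal_eq {h : ℕ} (hh : h ≤ n) (d : Fin h → ℕ) :
    powIdeal k hh d = MonSpan k (Pgen hh d) := by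
  unfold powIdeal MonSpan Pgen
  congr 1
  rw [← Set.range_comp]
  apply congrArg
  funext i
  simp only [Function.comp_apply]
  rw [X_pow_eq_monomial]

lemma lex_eq_MonSpan {L : Ideal (MvPolynomial (Fin n) k)} (hL : IsLexIdeal k L) :
    L = MonSpan k {a | monomial a (1 : k) ∈ L} := by
  apply le_antisymm
  · intro f hf
    rw [← support_sum_monomial_coeff f]
    apply Ideal.sum_mem
    intro a ha
    have h1 : monomial a (1 : k) ∈ MonSpan k {a | monomial a (1 : k) ∈ L} :=
      Ideal.subset_span ⟨a, hL.1 f hf a ha, rfl⟩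
    have : (monomial a) (coeff a f) = C (coeff a f) * monomial a (1 : k) := by
      rw [C_mul_monomial, mul_one]
    rw [this]
    exact Ideal.mul_mem_left _ _ h1
  · unfold MonSpan
    rw [Ideal.span_le]
    rintro _ ⟨a, ha, rfl⟩
    exact ha

/-- degree-`j` slice of a monomial lex ideal. -/
lemma degSet_lex {L : Ideal (MvPolynomial (Fin n) k)} (j : ℕ) :
    DegSet {a | monomial a (1 : k) ∈ L} j
      = {b | mdeg b = j ∧ monomial b (1 : k) ∈ L} := by
  ext b
  simp only [DegSet, Set.mem_setOf_eq]
  constructor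
  · rintro ⟨hd, a, ha, hle⟩
    refine ⟨hd, ?_⟩
    have : monomial b (1 : k) = monomial (b - a) (1 : k) * monomial a (1 : k) := by
      rw [monomial_mul, mul_one, tsub_add_cancel_of_le hle]
    rw [this]
    exact Ideal.mul_mem_left _ _ ha
  · rintro ⟨hd, hmem⟩
    exact ⟨hd, b, hmem, le_refl b⟩

lemma lexSeg_of_lex {L : Ideal (MvPolynomial (Fin n) k)} (hL : IsLexIdeal k L) (j : ℕ) :
    LexSeg j {b : Fin n →₀ ℕ | mdeg b = j ∧ monomial b (1 : k) ∈ L} := by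
  constructor
  · exact fun a ha => ha.1
  · rintro a ⟨ha1, ha2⟩ b hb hab
    exact ⟨hb, hL.2 a b (ha1.trans hb.symm) hab ha2⟩

lemma lexSeg_comparable {j : ℕ} {σ τ : Set (Fin n →₀ ℕ)}
    (hσ : LexSeg j σ) (hτ : LexSeg j τ) : σ ⊆ τ ∨ τ ⊆ σ := by
  by_cases h : σ ⊆ τ
  · exact Or.inl h
  · right
    rw [Set.not_subset] at h
    obtain ⟨s, hs, hsn⟩ := h
    intro t ht
    rcases eq_or_ne s t with rfl | hne
    · exact absurd ht hsn
    rcases monLT_trichotomy hne with hlt | hlt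
    · exact hσ.2 s hs t (hτ.1 t ht) hlt
    · exact absurd (hτ.2 t ht s (hσ.1 s hs) hlt) hsn

lemma union_seg_subset {j : ℕ} {P σ τ : Set (Fin n →₀ ℕ)}
    (hσ : LexSeg j σ) (hτ : LexSeg j τ)
    (hfin1 : (P ∪ σ).Finite) (hfin2 : (P ∪ τ).Finite)
    (hcard : (P ∪ σ).ncard ≤ (P ∪ τ).ncard) : P ∪ σ ⊆ P ∪ τ := by
  rcases lexSeg_comparable hσ hτ with h | h
  · exact Set.union_subset_union_right P h
  · have hsub : P ∪ τ ⊆ P ∪ σ := Set.union_subset_union_right P h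
    have := Set.eq_of_subset_of_ncard_le hsub hcard hfin1
    rw [this]

/-- distribute a budget `R` below caps `c`. -/
lemma exists_le_sum (c : Fin n → ℕ) (R : ℕ) (h : R ≤ ∑ i, c i) :
    ∃ v : Fin n → ℕ, (∀ i, v i ≤ c i) ∧ ∑ i, v i = R := by
  induction R with
  | zero => exact ⟨0, fun i => Nat.zero_le _, by simp⟩
  | succ R ih =>
    obtain ⟨v, hv, hsum⟩ := ih (Nat.le_of_succ_le h)
    have : ∃ i, v i < c i := by
      by_contra hc
      push_neg at hc
      have : ∑ i, c i ≤ ∑ i, v i := Finset.sum_le_sum fun i _ => hc i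
      omega
    obtain ⟨i, hi⟩ := this
    classical
    refine ⟨Function.update v i (v i + 1), ?_, ?_⟩
    · intro j
      rcases eq_or_ne j i with rfl | hji
      · simpa using hi
      · simp [Function.update_of_ne hji, hv j]
    · rw [Finset.sum_update_of_mem (Finset.mem_univ i)]
      have h2 := Finset.add_sum_erase Finset.univ v (Finset.mem_univ i)
      rw [Finset.sdiff_singleton_eq_erase]
      omega

lemma sum_split (p : Fin n) (g : Fin n → ℕ) :
    ∑ i, g i = (∑ i ∈ Finset.univ.filter (· < p), g i) + g p
      + ∑ i ∈ Finset.univ.filter (p < ·), g i := by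
  classical
  rw [← Finset.sum_filter_add_sum_filter_not Finset.univ (· < p) g]
  have h2 : Finset.univ.filter (fun i => ¬ i < p)
      = insert p (Finset.univ.filter (p < ·)) := by
    ext i
    simp only [Finset.mem_filter, Finset.mem_univ, true_and, Finset.mem_insert, not_lt]
    constructor
    · intro hi; rcases eq_or_lt_of_le hi with h | h
      · exact Or.inl h.symm
      · exact Or.inr (by simpa using h)
    · rintro (rfl | hi)
      · exact le_refl _
      · exact hi.le
  rw [h2, Finset.sum_insert (by simp)]
  ring

/-- the key lex-divisor lemma. -/
lemma exists_div_lex {u b c : Fin n →₀ ℕ} (hub : u ≤ b) (hdeg : mdeg b = mdeg c)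
    (hbc : b = c ∨ monLT b c) :
    ∃ u' : Fin n →₀ ℕ, mdeg u' = mdeg u ∧ (u = u' ∨ monLT u u') ∧ u' ≤ c := by
  classical
  rcases hbc with rfl | ⟨p, hpre, hplt⟩
  · exact ⟨u, rfl, Or.inl rfl, hub⟩
  have hub' := Finsupp.le_def.mp hub
  -- budget
  set R : ℕ := ∑ i ∈ Finset.univ.filter (p ≤ ·), u i with hR
  have hRsplit : ∀ g : Fin n → ℕ,
      ∑ i ∈ Finset.univ.filter (p ≤ ·), g i
        = g p + ∑ i ∈ Finset.univ.filter (p < ·), g i := by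
    intro g
    have : Finset.univ.filter (p ≤ ·) = insert p (Finset.univ.filter (p < ·)) := by
      ext i
      simp only [Finset.mem_filter, Finset.mem_univ, true_and, Finset.mem_insert]
      constructor
      · intro hi; rcases eq_or_lt_of_le hi with h | h
        · exact Or.inl h.symm
        · exact Or.inr h
      · rintro (rfl | hi)
        · exact le_refl _
        · exact hi.le
    rw [this, Finset.sum_insert (by simp)]
  -- R ≤ caps on the region ≥ p
  have hsum_lt : ∀ g : Fin n → ℕ, ∑ i, g i
      = (∑ i ∈ Finset.univ.filter (· < p), g i) + ∑ i ∈ Finset.univ.filter (p ≤ ·), g i := by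
    intro g
    rw [sum_split p g, hRsplit g]; ring
  have hlt_eq : (∑ i ∈ Finset.univ.filter (· < p), (b : Fin n → ℕ) i)
      = ∑ i ∈ Finset.univ.filter (· < p), c i := by
    apply Finset.sum_congr rfl
    intro i hi
    exact hpre i (Finset.mem_filter.mp hi).2
  have hBC : ∑ i ∈ Finset.univ.filter (p ≤ ·), (b : Fin n → ℕ) i
      = ∑ i ∈ Finset.univ.filter (p ≤ ·), c i := by
    have hb := hsum_lt (b : Fin n → ℕ)
    have hc := hsum_lt (c : Fin n → ℕ)
    have : ∑ i, (b : Fin n → ℕ) i = ∑ i, (c : Fin n → ℕ) i := by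
      rw [← mdeg_eq_sum, ← mdeg_eq_sum, hdeg]
    omega
  have hRle : R ≤ ∑ i ∈ Finset.univ.filter (p ≤ ·), (c : Fin n → ℕ) i := by
    rw [← hBC, hR]
    exact Finset.sum_le_sum fun i _ => hub' i
  set m : ℕ := min (c p) R with hm
  have hupR : u p ≤ R := by
    rw [hR]
    exact Finset.single_le_sum (fun _ _ => Nat.zero_le _)
      (Finset.mem_filter.mpr ⟨Finset.mem_univ p, le_refl p⟩)
  have hupcp : u p < c p := lt_of_le_of_lt (hub' p) hplt
  have hupm : u p ≤ m := le_min (hupcp.le) hupR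
  -- distribute R - m on region > p
  have hcaps : R - m ≤ ∑ i, (fun i => if p < i then c i else 0) i := by
    have : ∑ i, (fun i => if p < i then c i else 0) i
        = ∑ i ∈ Finset.univ.filter (p < ·), (c : Fin n → ℕ) i := by
      rw [Finset.sum_filter]
    rw [this]
    have := hRsplit (c : Fin n → ℕ)
    omega
  obtain ⟨w, hwle, hwsum⟩ := exists_le_sum _ _ hcaps
  have hw0 : ∀ i, ¬ p < i → w i = 0 := by
    intro i hi
    have := hwle i
    simpa [if_neg hi] using this
  -- the candidate
  set F : Fin n → ℕ := fun l => if l < p then u l else if l = p then m else w l with hF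
  refine ⟨Finsupp.equivFunOnFinite.symm F, ?_, ?_, ?_⟩
  · -- degree
    have happ : ∀ i, (Finsupp.equivFunOnFinite.symm F) i = F i := fun i => rfl
    rw [mdeg_eq_sum, mdeg_eq_sum]
    have h1 : ∑ i, (Finsupp.equivFunOnFinite.symm F) i = ∑ i, F i :=
      Finset.sum_congr rfl fun i _ => happ i
    rw [h1, sum_split p F, sum_split p (u : Fin n → ℕ)]
    have e1 : ∑ i ∈ Finset.univ.filter (· < p), F i
        = ∑ i ∈ Finset.univ.filter (· < p), (u : Fin n → ℕ) i := by
      apply Finset.sum_congr rfl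
      intro i hi
      simp [hF, if_pos (Finset.mem_filter.mp hi).2]
    have e2 : F p = m := by simp [hF]
    have e3 : ∑ i ∈ Finset.univ.filter (p < ·), F i
        = ∑ i ∈ Finset.univ.filter (p < ·), w i := by
      apply Finset.sum_congr rfl
      intro i hi
      have h := (Finset.mem_filter.mp hi).2
      show F i = w i
      rw [hF]
      simp only [if_neg (not_lt.mpr h.le), if_neg (ne_of_gt h)]
    have e4 : ∑ i ∈ Finset.univ.filter (p < ·), w i = ∑ i, w i := by
      rw [Finset.sum_filter_of_ne]
      intro i _ hwi
      by_contra hc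
      exact hwi (hw0 i hc)
    have e5 : u p + ∑ i ∈ Finset.univ.filter (p < ·), (u : Fin n → ℕ) i = R := by
      rw [hR, hRsplit]
    have hmR : m ≤ R := min_le_right _ _
    rw [e1, e2, e3, e4, hwsum]
    omega
  · -- lex
    rcases eq_or_lt_of_le hupm with heq | hlt
    · -- m = u p : then R = u p, everything above p vanishes, u' = u
      left
      have hmcp : m ≤ c p := min_le_left _ _
      have hRup : R = u p := by
        rcases le_total (c p) R with h | h
        · have : m = c p := min_eq_left h
          omega
        · have : m = R := min_eq_right h
          omega
      have htail : ∑ i ∈ Finset.univ.filter (p < ·), (u : Fin n → ℕ) i = 0 := by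
        have := hRsplit (u : Fin n → ℕ)
        omega
      have hu0 : ∀ i, p < i → u i = 0 := by
        intro i hi
        have := Finset.sum_eq_zero_iff.mp htail i
          (Finset.mem_filter.mpr ⟨Finset.mem_univ i, hi⟩)
        exact this
      have hwall : ∀ i, w i = 0 := by
        intro i
        rcases Classical.em (p < i) with h | h
        · have : ∑ j, w j = 0 := by omega
          exact Finset.sum_eq_zero_iff.mp this i (Finset.mem_univ i)
        · exact hw0 i h
      ext i
      show u i = F i
      rcases lt_trichotomy i p with h | rfl | h
      · simp [hF, if_pos h]
      · have : F i = m := by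
          rw [hF]
          simp only [if_neg (lt_irrefl i), eq_self_iff_true, if_true]
        rw [this]
        exact heq
      · rw [hF]
        simp only [if_neg (not_lt.mpr h.le), if_neg (ne_of_gt h)]
        rw [hwall i, hu0 i h]
    · -- m > u p : strict lex increase at p
      right
      refine ⟨p, ?_, ?_⟩
      · intro j hj
        show u j = F j
        simp [hF, if_pos hj]
      · show u p < F p
        simp only [hF, lt_irrefl, if_neg (lt_irrefl p), if_pos rfl]
        exact hlt
  · -- ≤ c
    rw [Finsupp.le_def]
    intro i
    show F i ≤ c i
    rcases lt_trichotomy i p with h | rfl | h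
    · rw [hF]
      simp only [if_pos h]
      exact le_of_le_of_eq (hub' i) (hpre i h)
    · have : F i = m := by
        rw [hF]
        simp only [if_neg (lt_irrefl i), eq_self_iff_true, if_true]
      rw [this]
      exact min_le_left _ _
    · rw [hF]
      simp only [if_neg (not_lt.mpr h.le), if_neg (ne_of_gt h)]
      have := hwle i
      simpa [if_pos h] using this


end EGHAux

/-- if `I` satisfies the degree-by-degree condition `EGH_{d,n}(j)` for every
`j`, then `I` satisfies `EGH_{d,n}`: a single `d`-LPP ideal matches the whole Hilbert
function of `I`. -/
theorem stmt14 (k : Type) [Field k] {n h : ℕ} (hh : h ≤ n)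
    (d : Fin h → ℕ) (hmono : Monotone d) (hpos : ∀ i, 1 ≤ d i)
    (I : Ideal (MvPolynomial (Fin n) k)) (hI : IsHomog k I) (hrs : ContainsRS k d I)
    (hj : ∀ j : ℕ, ∃ 𝕃 : Ideal (MvPolynomial (Fin n) k), IsLPP k hh d 𝕃 ∧
      HF k I j = HF k 𝕃 j ∧ HF k 𝕃 (j + 1) ≤ HF k I (j + 1)) :
    ∃ 𝕃 : Ideal (MvPolynomial (Fin n) k), IsLPP k hh d 𝕃 ∧
      ∀ j : ℕ, HF k 𝕃 j = HF k I j := by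
  classical
  open EGHAux in
  choose 𝕃 hLPP hHF1 hHF2 using hj
  have hLPP' : ∀ j, ∃ L, IsLexIdeal k L ∧ 𝕃 j = powIdeal k hh d ⊔ L := hLPP
  choose L hLlex hLeq using hLPP'
  set P : Set (Fin n →₀ ℕ) := EGHAux.Pgen hh d with hP
  have h𝕃A : ∀ j, 𝕃 j = EGHAux.MonSpan k (P ∪ {a | monomial a (1 : k) ∈ L j}) := by
    intro j
    have h1 : L j = EGHAux.MonSpan k {a | monomial a (1 : k) ∈ L j} :=
      EGHAux.lex_eq_MonSpan (hLlex j)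
    rw [hP, hLeq j, EGHAux.powIdeal_eq]
    conv_lhs => rw [h1]
    rw [EGHAux.MonSpan_sup]
  have hHFj : ∀ j m, HF k (𝕃 j) m
      = (EGHAux.DegSet (P ∪ {a | monomial a (1 : k) ∈ L j}) m).ncard := by
    intro j m; rw [h𝕃A j, EGHAux.HF_MonSpan]
  have hdecomp : ∀ j m, EGHAux.DegSet (P ∪ {a | monomial a (1 : k) ∈ L j}) m
      = EGHAux.DegSet P m ∪ {b | mdeg b = m ∧ monomial b (1 : k) ∈ L j} := by
    intro j m
    rw [EGHAux.DegSet_union, EGHAux.degSet_lex]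
  have hseg : ∀ j m, LexSeg m {b : Fin n →₀ ℕ | mdeg b = m ∧ monomial b (1 : k) ∈ L j} :=
    fun j m => EGHAux.lexSeg_of_lex (hLlex j) m
  -- T j : the degree-j monomial slice of 𝕃 j
  set T : ℕ → Set (Fin n →₀ ℕ) :=
    fun j => EGHAux.DegSet (P ∪ {a | monomial a (1 : k) ∈ L j}) j with hTdef
  -- the step inclusion
  have hstep : ∀ j, EGHAux.DegSet (P ∪ {a | monomial a (1 : k) ∈ L j}) (j + 1) ⊆ T (j + 1) := by
    intro j
    have hc : (EGHAux.DegSet (P ∪ {a | monomial a (1 : k) ∈ L j}) (j + 1)).ncard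
        ≤ (EGHAux.DegSet (P ∪ {a | monomial a (1 : k) ∈ L (j + 1)}) (j + 1)).ncard := by
      rw [← hHFj j (j + 1), ← hHFj (j + 1) (j + 1)]
      exact (hHF2 j).trans (le_of_eq (hHF1 (j + 1)))
    show EGHAux.DegSet (P ∪ {a | monomial a (1 : k) ∈ L j}) (j + 1)
        ⊆ EGHAux.DegSet (P ∪ {a | monomial a (1 : k) ∈ L (j + 1)}) (j + 1)
    rw [hdecomp j (j + 1), hdecomp (j + 1) (j + 1)] at hc ⊢
    exact EGHAux.union_seg_subset (hseg j (j + 1)) (hseg (j + 1) (j + 1))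
      (by rw [← hdecomp]; exact EGHAux.finite_DegSet _ _)
      (by rw [← hdecomp]; exact EGHAux.finite_DegSet _ _) hc
  -- the union of all slices
  set 𝕋 : Set (Fin n →₀ ℕ) := {a | a ∈ T (mdeg a)} with h𝕋def
  have hmdegT : ∀ j a, a ∈ T j → mdeg a = j := by
    intro j a ha
    rw [hTdef] at ha
    exact ha.1
  have hTsub𝕋 : ∀ j, T j ⊆ 𝕋 := by
    intro j a ha
    have hd := hmdegT j a ha
    rw [h𝕋def]
    show a ∈ T (mdeg a)
    rw [hd]; exact ha
  have h𝕋T : ∀ j a, a ∈ 𝕋 → mdeg a = j → a ∈ T j := by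
    intro j a ha hd
    rw [h𝕋def] at ha
    rw [← hd]; exact ha
  have hstep' : ∀ (a : Fin n →₀ ℕ) (i : Fin n), a ∈ 𝕋 → a + Finsupp.single i 1 ∈ 𝕋 := by
    intro a i ha
    have hd : mdeg (a + Finsupp.single i 1) = mdeg a + 1 := by
      rw [EGHAux.mdeg_add, EGHAux.mdeg_single]
    have ha' : a ∈ T (mdeg a) := ha
    rw [hTdef] at ha'
    obtain ⟨hda, g, hg, hgle⟩ := ha'
    have h1 : a + Finsupp.single i 1
        ∈ EGHAux.DegSet (P ∪ {x | monomial x (1 : k) ∈ L (mdeg a)}) (mdeg a + 1) := by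
      refine ⟨by rw [hd], g, hg, hgle.trans ?_⟩
      exact le_add_of_nonneg_right zero_le
    exact hTsub𝕋 (mdeg a + 1) (hstep (mdeg a) h1)
  have hup : ∀ (D : ℕ) (a c : Fin n →₀ ℕ), mdeg c - mdeg a ≤ D → a ∈ 𝕋 → a ≤ c → c ∈ 𝕋 := by
    intro D
    induction D with
    | zero =>
      intro a c hD ha hac
      have hle := EGHAux.mdeg_le_of_le hac
      have : a = c := EGHAux.eq_of_le_of_mdeg_le hac (by omega)
      rwa [← this]
    | succ D ih =>
      intro a c hD ha hac
      rcases eq_or_ne a c with rfl | hne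
      · exact ha
      · obtain ⟨i, hi⟩ : ∃ i, a i < c i := by
          by_contra hcon
          push_neg at hcon
          exact hne (le_antisymm hac (Finsupp.le_def.mpr hcon))
        have hle : a + Finsupp.single i 1 ≤ c := by
          rw [Finsupp.le_def]
          intro l
          rcases eq_or_ne l i with rfl | hne'
          · simpa using hi
          · have := Finsupp.le_def.mp hac l
            simp only [Finsupp.add_apply, Finsupp.single_apply, if_neg (Ne.symm hne')]
            omega
        apply ih (a + Finsupp.single i 1) c _ (hstep' a i ha) hle
        have hda : mdeg (a + Finsupp.single i 1) = mdeg a + 1 := by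
          rw [EGHAux.mdeg_add, EGHAux.mdeg_single]
        have hdlt := EGHAux.mdeg_le_of_le hle
        omega
  have h𝕋up : ∀ a c : Fin n →₀ ℕ, a ∈ 𝕋 → a ≤ c → c ∈ 𝕋 :=
    fun a c => hup (mdeg c - mdeg a) a c le_rfl
  have hT𝕋 : ∀ j, EGHAux.DegSet 𝕋 j = T j := by
    intro j
    ext b
    constructor
    · rintro ⟨hd, a, ha, hle⟩
      exact h𝕋T j b (h𝕋up a b ha hle) hd
    · intro hb
      exact ⟨hmdegT j b hb, b, hTsub𝕋 j hb, le_rfl⟩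
  -- the lex part
  set S : ℕ → Set (Fin n →₀ ℕ) := fun j =>
    {a | mdeg a = j ∧ ∀ b, mdeg b = j → (a = b ∨ monLT a b) → b ∈ 𝕋} with hSdef
  set 𝕊 : Set (Fin n →₀ ℕ) := {a | a ∈ S (mdeg a)} with h𝕊def
  have h𝕊sub : 𝕊 ⊆ 𝕋 := by
    intro a ha
    have ha' : a ∈ S (mdeg a) := ha
    rw [hSdef] at ha'
    exact ha'.2 a rfl (Or.inl rfl)
  have hS𝕊 : ∀ j a, a ∈ S j → a ∈ 𝕊 := by
    intro j a ha
    have hd : mdeg a = j := by rw [hSdef] at ha; exact ha.1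
    rw [h𝕊def]
    show a ∈ S (mdeg a)
    rw [hd]; exact ha
  have hTdecomp : ∀ j, T j = EGHAux.DegSet P j ∪ S j := by
    intro j
    apply Set.Subset.antisymm
    · intro b hb
      have hb' : b ∈ EGHAux.DegSet P j ∪ {x | mdeg x = j ∧ monomial x (1 : k) ∈ L j} := by
        rw [← hdecomp j j]
        exact hb
      rcases hb' with h1 | h1
      · exact Or.inl h1
      · refine Or.inr ?_
        rw [hSdef]
        refine ⟨h1.1, ?_⟩
        intro b' hb'd hbb'
        rcases hbb' with rfl | hlt
        · exact hTsub𝕋 j hb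
        · have : b' ∈ {x : Fin n →₀ ℕ | mdeg x = j ∧ monomial x (1 : k) ∈ L j} :=
            (hseg j j).2 b h1 b' hb'd hlt
          apply hTsub𝕋 j
          show b' ∈ EGHAux.DegSet (P ∪ {a | monomial a (1 : k) ∈ L j}) j
          rw [hdecomp j j]
          exact Or.inr this
    · intro b hb
      rcases hb with h1 | h1
      · show b ∈ EGHAux.DegSet (P ∪ {a | monomial a (1 : k) ∈ L j}) j
        rw [hdecomp j j]
        exact Or.inl h1
      · have hd : mdeg b = j := by rw [hSdef] at h1; exact h1.1
        exact h𝕋T j b (h𝕊sub (hS𝕊 j b h1)) hd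
  have hfinal : ∀ j, EGHAux.DegSet (P ∪ 𝕊) j = T j := by
    intro j
    rw [EGHAux.DegSet_union]
    apply Set.Subset.antisymm
    · intro b hb
      rcases hb with h1 | h1
      · rw [hTdecomp j]; exact Or.inl h1
      · obtain ⟨hd, a, ha, hle⟩ := h1
        exact h𝕋T j b (h𝕋up a b (h𝕊sub ha) hle) hd
    · intro b hb
      rw [hTdecomp j] at hb
      rcases hb with h1 | h1
      · exact Or.inl h1
      · refine Or.inr ⟨?_, b, hS𝕊 j b h1, le_rfl⟩
        rw [hSdef] at h1
        exact h1.1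
  -- the final ideal
  refine ⟨EGHAux.MonSpan k (P ∪ 𝕊), ⟨EGHAux.MonSpan k 𝕊, ?_, ?_⟩, ?_⟩
  · -- lex ideal
    constructor
    · intro f hf a ha
      exact EGHAux.monomial_mem_MonSpan.mpr ((EGHAux.mem_MonSpan.mp hf) a ha)
    · intro a b hd hab hmem
      obtain ⟨s, hs, hsle⟩ := EGHAux.monomial_mem_MonSpan.mp hmem
      obtain ⟨s', hs'd, hss', hs'le⟩ := EGHAux.exists_div_lex hsle hd (Or.inr hab)
      refine EGHAux.monomial_mem_MonSpan.mpr ⟨s', ?_, hs'le⟩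
      have hs2 : s ∈ S (mdeg s) := hs
      rw [hSdef] at hs2
      rw [h𝕊def]
      show s' ∈ S (mdeg s')
      rw [hSdef]
      refine ⟨rfl, ?_⟩
      intro b' hb'd hs'b'
      apply hs2.2 b' (by omega)
      rcases hss' with rfl | h1
      · exact hs'b'
      · rcases hs'b' with rfl | h2
        · exact Or.inr h1
        · exact Or.inr (EGHAux.monLT_trans h1 h2)
  · -- 𝕃 = powIdeal ⊔ L
    rw [EGHAux.powIdeal_eq, EGHAux.MonSpan_sup]
  · -- Hilbert function
    intro j
    rw [EGHAux.HF_MonSpan, hfinal j, hTdef, ← hHFj j j, ← hHF1 j]
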